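/- Let H : ℝ → ℝ be continuous and coercive and F0 : ℝ → ℝ be continuous, non-increasing and semi-coercive, and let p ∈ ℝ. If (R̲F0)(p) > H(p), then there exists ε > 0 such that R̲F0 is constant on the interval [p − ε, p + ε). If (R̄F0)(p) < H(p), then there exists ε > 0 such that R̄F0 is constant on the interval (p − ε, p + ε]. -/

import Mathlib

open Set Filter

attribute [local instance] Classical.propDecidable

noncomputable section

/-- `H` is coercive: `H p → +∞` as `|p| → +∞`. -/
def Coercive (H : ℝ → ℝ) : Prop := Tendsto H (cocompact ℝ) atTop

/-- `F` is semi-coercive: `F p → +∞` as `p → -∞`. -/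
def SemiCoercive (F : ℝ → ℝ) : Prop := Tendsto F atBot atTop

/-- Sub-relaxation: `(R̲F)(p) = sup_{q ≥ p} min (F q) (H q)`. -/
def subR (H F : ℝ → ℝ) (p : ℝ) : ℝ := sSup ((fun q => min (F q) (H q)) '' Ici p)

/-- Super-relaxation: `(R̄F)(p) = inf_{q ≤ p} max (F q) (H q)`. -/
def supR (H F : ℝ → ℝ) (p : ℝ) : ℝ := sInf ((fun q => max (F q) (H q)) '' Iic p)

/-- Relaxation operator: `R̲F` where `F ≥ H`, `R̄F` where `F ≤ H`. -/
def relax (H F : ℝ → ℝ) (p : ℝ) : ℝ := if H p ≤ F p then subR H F p else supR H F p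

/-- `p` is a negative characteristic point of `F` relative to `H`. -/
def negChar (H F : ℝ → ℝ) (p : ℝ) : Prop :=
  H p = F p ∧ ∃ ε > 0, ∀ q ∈ Ioo (p - ε) p, H q < H p

/-- `p` is a positive characteristic point of `F` relative to `H`. -/
def posChar (H F : ℝ → ℝ) (p : ℝ) : Prop :=
  H p = F p ∧ ∃ ε > 0, ∀ q ∈ Ioo p (p + ε), H p < H q

/-- The upper point `p⁺ ∈ ℝ ∪ {+∞}` associated with `p` and `H`. -/
def upperPt (H : ℝ → ℝ) (p : ℝ) : EReal :=
  if ∀ ε > 0, ∃ q, p < q ∧ q < p + ε ∧ H q ≤ H p then (p : EReal)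
  else sSup ((fun q : ℝ => (q : EReal)) '' {q : ℝ | p < q ∧ ∀ r ∈ Ioo p q, H p < H r})

/-- The lower point `p⁻` associated with `p` and `H`. -/
def lowerPt (H : ℝ → ℝ) (p : ℝ) : ℝ :=
  if ∀ ε > 0, ∃ q, p - ε < q ∧ q < p ∧ H p ≤ H q then p
  else sInf {q : ℝ | q < p ∧ ∀ r ∈ Ioo q p, H r < H p}

/-- `p` is a positive limiter point of `F`. -/
def posLimiter (H F : ℝ → ℝ) (p : ℝ) : Prop :=
  (p : EReal) < upperPt H p ∧ F p ≤ H p ∧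
    ∀ q : ℝ, H q < H p → F q ≤ H q →
      {r : ℝ | lowerPt H q < r ∧ (r : EReal) < upperPt H q} ∩
        {r : ℝ | p < r ∧ (r : EReal) < upperPt H p} = ∅

/-- `p` is a negative limiter point of `F`. -/
def negLimiter (H F : ℝ → ℝ) (p : ℝ) : Prop :=
  lowerPt H p < p ∧ H p ≤ F p ∧
    ∀ q : ℝ, H q ≤ F q → H p < H q →
      {r : ℝ | lowerPt H q < r ∧ (r : EReal) < upperPt H q} ∩ Ioo (lowerPt H p) p = ∅

/-- The Godunov flux associated with `H`. -/
def godunov (H : ℝ → ℝ) (q p : ℝ) : ℝ :=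
  if p ≤ q then sSup (H '' Icc p q) else sInf (H '' Icc q p)

/-- The lower (set-valued) Godunov semi-flux `G̲(q,p)`, as a subset of the extended reals. -/
def subG (H : ℝ → ℝ) (q p : ℝ) : Set EReal :=
  if q < p then {⊥}
  else if q = p then Iic ((H p : ℝ) : EReal)
  else {((godunov H q p : ℝ) : EReal)}

/-- The upper (set-valued) Godunov semi-flux `Ḡ(q,p)`, as a subset of the extended reals. -/
def supG (H : ℝ → ℝ) (q p : ℝ) : Set EReal :=
  if q < p then {((godunov H q p : ℝ) : EReal)}
  else if q = p then Ici ((H p : ℝ) : EReal)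
  else {⊤}

/-- Local properties of `R̲F0` and `R̄F0`. -/
theorem local_properties_of_semi_relaxations (H F0 : ℝ → ℝ)
    (hH : Continuous H) (hHc : Coercive H)
    (hF : Continuous F0) (hFa : Antitone F0) (hFs : SemiCoercive F0) (p : ℝ) :
    (H p < subR H F0 p →
      ∃ ε > 0, ∀ x ∈ Ico (p - ε) (p + ε), subR H F0 x = subR H F0 p) ∧
    (supR H F0 p < H p →
      ∃ ε > 0, ∀ x ∈ Ioc (p - ε) (p + ε), supR H F0 x = supR H F0 p) := by
  constructor
  · intro hlt
    set f : ℝ → ℝ := fun q => min (F0 q) (H q) with hf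
    have hbdd : ∀ x : ℝ, BddAbove (f '' Ici x) := by
      intro x
      refine ⟨F0 x, ?_⟩
      rintro y ⟨q, hq, rfl⟩
      exact le_trans (min_le_left _ _) (hFa hq)
    have hne : ∀ x : ℝ, (f '' Ici x).Nonempty := fun x => ⟨f x, x, self_mem_Ici, rfl⟩
    set c := (H p + subR H F0 p) / 2 with hc
    have hc1 : H p < c := by rw [hc]; linarith
    have hc2 : c < subR H F0 p := by rw [hc]; linarith
    have hopen : IsOpen {q : ℝ | H q < c} := isOpen_lt hH continuous_const
    obtain ⟨r, hr, hball⟩ := Metric.isOpen_iff.1 hopen p hc1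
    refine ⟨r / 2, by positivity, ?_⟩
    intro x hx
    have hsmall : ∀ q ∈ Icc (p - r / 2) (p + r / 2), H q < c := by
      intro q hq
      apply hball
      rw [Metric.mem_ball, Real.dist_eq, abs_lt]
      constructor <;> [linarith [hq.1]; linarith [hq.2]]
    rcases le_or_gt x p with hxp | hxp
    · have hsplit : Ici x = Icc x p ∪ Ici p := by
        ext q
        simp only [mem_Ici, mem_Icc, mem_union]
        constructor
        · intro h
          rcases le_or_gt q p with h' | h'
          · exact Or.inl ⟨h, h'⟩
          · exact Or.inr h'.le
        · rintro (⟨h, _⟩ | h)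
          · exact h
          · linarith
      have hIne : (f '' Icc x p).Nonempty := ⟨f x, x, ⟨le_refl x, hxp⟩, rfl⟩
      have hIbdd : BddAbove (f '' Icc x p) :=
        (hbdd x).mono (image_mono (f := f) Icc_subset_Ici_self)
      have hIle : sSup (f '' Icc x p) ≤ c := by
        apply csSup_le hIne
        rintro y ⟨q, hq, rfl⟩
        refine le_trans (min_le_right _ _) (hsmall q ⟨le_trans hx.1 hq.1, le_trans hq.2 (by linarith)⟩).le
      have key : subR H F0 x = sSup (f '' Icc x p) ⊔ subR H F0 p := by
        rw [subR, hsplit, image_union, csSup_union hIbdd hIne (hbdd p) (hne p)]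
        rfl
      rw [key]
      exact sup_eq_right.mpr (le_trans hIle hc2.le)
    · have hsplit : Ici p = Icc p x ∪ Ici x := by
        ext q
        simp only [mem_Ici, mem_Icc, mem_union]
        constructor
        · intro h
          rcases le_or_gt q x with h' | h'
          · exact Or.inl ⟨h, h'⟩
          · exact Or.inr h'.le
        · rintro (⟨h, _⟩ | h)
          · exact h
          · linarith
      have hIne : (f '' Icc p x).Nonempty := ⟨f p, p, ⟨le_refl p, hxp.le⟩, rfl⟩
      have hIbdd : BddAbove (f '' Icc p x) :=
        (hbdd p).mono (image_mono (f := f) Icc_subset_Ici_self)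
      have hIle : sSup (f '' Icc p x) ≤ c := by
        apply csSup_le hIne
        rintro y ⟨q, hq, rfl⟩
        refine le_trans (min_le_right _ _) (hsmall q ⟨by linarith [hq.1], le_trans hq.2 (by linarith [hx.2])⟩).le
      have key : subR H F0 p = sSup (f '' Icc p x) ⊔ subR H F0 x := by
        rw [subR, hsplit, image_union, csSup_union hIbdd hIne (hbdd x) (hne x)]
        rfl
      have h1 : subR H F0 x ≤ subR H F0 p :=
        csSup_le_csSup (hbdd p) (hne x) (image_mono (f := f) (Ici_subset_Ici.2 hxp.le))
      have h2 : subR H F0 p ≤ subR H F0 x := by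
        rcases le_sup_iff.mp key.le with h | h
        · linarith
        · exact h
      linarith
  · intro hlt
    set g : ℝ → ℝ := fun q => max (F0 q) (H q) with hg
    have hbdd : ∀ x : ℝ, BddBelow (g '' Iic x) := by
      intro x
      refine ⟨F0 x, ?_⟩
      rintro y ⟨q, hq, rfl⟩
      exact le_trans (hFa hq) (le_max_left _ _)
    have hne : ∀ x : ℝ, (g '' Iic x).Nonempty := fun x => ⟨g x, x, self_mem_Iic, rfl⟩
    set c := (supR H F0 p + H p) / 2 with hc
    have hc1 : c < H p := by rw [hc]; linarith
    have hc2 : supR H F0 p < c := by rw [hc]; linarith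
    have hopen : IsOpen {q : ℝ | c < H q} := isOpen_lt continuous_const hH
    obtain ⟨r, hr, hball⟩ := Metric.isOpen_iff.1 hopen p hc1
    refine ⟨r / 2, by positivity, ?_⟩
    intro x hx
    have hsmall : ∀ q ∈ Icc (p - r / 2) (p + r / 2), c < H q := by
      intro q hq
      apply hball
      rw [Metric.mem_ball, Real.dist_eq, abs_lt]
      constructor <;> [linarith [hq.1]; linarith [hq.2]]
    rcases le_or_gt p x with hxp | hxp
    · have hsplit : Iic x = Iic p ∪ Icc p x := by
        ext q
        simp only [mem_Iic, mem_Icc, mem_union]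
        constructor
        · intro h
          rcases le_or_gt q p with h' | h'
          · exact Or.inl h'
          · exact Or.inr ⟨h'.le, h⟩
        · rintro (h | ⟨_, h⟩)
          · linarith
          · exact h
      have hIne : (g '' Icc p x).Nonempty := ⟨g p, p, ⟨le_refl p, hxp⟩, rfl⟩
      have hIbdd : BddBelow (g '' Icc p x) :=
        (hbdd x).mono (image_mono (f := g) Icc_subset_Iic_self)
      have hIle : c ≤ sInf (g '' Icc p x) := by
        apply le_csInf hIne
        rintro y ⟨q, hq, rfl⟩
        refine le_trans (hsmall q ⟨by linarith [hq.1], le_trans hq.2 hx.2⟩).le (le_max_right _ _)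
      have key : supR H F0 x = supR H F0 p ⊓ sInf (g '' Icc p x) := by
        rw [supR, hsplit, image_union, csInf_union (hbdd p) (hne p) hIbdd hIne]
        rfl
      rw [key]
      exact inf_eq_left.mpr (le_trans hc2.le hIle)
    · have hsplit : Iic p = Iic x ∪ Icc x p := by
        ext q
        simp only [mem_Iic, mem_Icc, mem_union]
        constructor
        · intro h
          rcases le_or_gt q x with h' | h'
          · exact Or.inl h'
          · exact Or.inr ⟨h'.le, h⟩
        · rintro (h | ⟨_, h⟩)
          · linarith
          · exact h
      have hIne : (g '' Icc x p).Nonempty := ⟨g x, x, ⟨le_refl x, hxp.le⟩, rfl⟩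
      have hIbdd : BddBelow (g '' Icc x p) :=
        (hbdd p).mono (image_mono (f := g) Icc_subset_Iic_self)
      have hIle : c ≤ sInf (g '' Icc x p) := by
        apply le_csInf hIne
        rintro y ⟨q, hq, rfl⟩
        refine le_trans (hsmall q ⟨by linarith [hx.1, hq.1], by linarith [hq.2]⟩).le (le_max_right _ _)
      have key : supR H F0 p = supR H F0 x ⊓ sInf (g '' Icc x p) := by
        rw [supR, hsplit, image_union, csInf_union (hbdd x) (hne x) hIbdd hIne]
        rfl
      have h1 : supR H F0 p ≤ supR H F0 x :=
        csInf_le_csInf (hbdd p) (hne x) (image_mono (f := g) (Iic_subset_Iic.2 hxp.le))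
      have h2 : supR H F0 x ≤ supR H F0 p := by
        rcases inf_le_iff.mp key.ge with h | h
        · exact h
        · linarith
      linarith
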